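/- Let K be a conjugacy class of a finite group G with KK⁻¹ = {1} ∪ D for a conjugacy class D, and suppose |D| = |K|(|K|−1). Then ⟨K⟩ is abelian. -/

import Mathlib

open Pointwise

/-- The conjugacy class of `a` in `G`. -/
def conjClass (G : Type*) [Group G] (a : G) : Set G := {b | IsConj a b}

theorem stmt4 {G : Type*} [Group G] [Fintype G] (x d : G)
    (h : conjClass G x * (conjClass G x)⁻¹ = {1} ∪ conjClass G d)
    (hcard : Nat.card (conjClass G d) =
      Nat.card (conjClass G x) * (Nat.card (conjClass G x) - 1)) :
    IsMulCommutative (Subgroup.closure (conjClass G x)) := by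
  classical
  set K : Set G := conjClass G x with hK
  set D : Set G := conjClass G d with hD
  have hxK : x ∈ K := IsConj.refl x
  -- conjugation stability of K
  have hconj : ∀ a ∈ K, ∀ g : G, g * a * g⁻¹ ∈ K := by
    intro a ha g
    exact ha.trans (isConj_iff.mpr ⟨g, rfl⟩)
  -- d ≠ 1
  have hk1 : 1 ≤ Nat.card K := by
    have : (K.toFinset).Nonempty := ⟨x, Set.mem_toFinset.mpr hxK⟩
    have h1 : 0 < K.toFinset.card := Finset.card_pos.mpr this
    rwa [Set.toFinset_card, ← Nat.card_eq_fintype_card] at h1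
  have hd1 : d ≠ 1 := by
    intro hd
    subst hd
    have : D = {1} := by
      ext y
      simp only [hD, conjClass, Set.mem_setOf_eq, Set.mem_singleton_iff]
      constructor
      · intro hy; exact isConj_one_right.mp hy
      · rintro rfl; exact IsConj.refl 1
    have hD1 : Nat.card D = 1 := by rw [this]; simp
    rw [hD1] at hcard
    have hdvd : Nat.card K ∣ 1 := Dvd.intro _ hcard.symm
    rw [Nat.dvd_one.mp hdvd] at hcard
    simp at hcard
  have h1D : (1 : G) ∉ D := by
    intro h1
    exact hd1 (isConj_one_left.mp h1)
  -- Finset versions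
  set Kf : Finset G := K.toFinset with hKf
  set Df : Finset G := D.toFinset with hDf
  have hcardK : Nat.card K = Kf.card := by
    rw [hKf, Set.toFinset_card, Nat.card_eq_fintype_card]
  have hcardD : Nat.card D = Df.card := by
    rw [hDf, Set.toFinset_card, Nat.card_eq_fintype_card]
  -- the map on off-diagonal pairs
  have hmaps : ∀ p : G × G, p ∈ Kf.offDiag → p.1 * p.2⁻¹ ∈ Df := by
    rintro ⟨a, b⟩ hp
    rw [Finset.mem_offDiag] at hp
    obtain ⟨ha, hb, hab⟩ := hp
    have ha' : a ∈ K := Set.mem_toFinset.mp ha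
    have hb' : b ∈ K := Set.mem_toFinset.mp hb
    have : a * b⁻¹ ∈ K * K⁻¹ := Set.mul_mem_mul ha' (Set.inv_mem_inv.mpr hb')
    rw [h] at this
    rcases this with h1 | hmem
    · exact absurd (mul_inv_eq_one.mp (Set.mem_singleton_iff.mp h1)) hab
    · exact Set.mem_toFinset.mpr hmem
  have hsurj : ∀ b ∈ Df, ∃ p ∈ Kf.offDiag, p.1 * p.2⁻¹ = b := by
    intro δ hδ
    have hδD : δ ∈ D := Set.mem_toFinset.mp hδ
    have : δ ∈ K * K⁻¹ := by rw [h]; exact Or.inr hδD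
    obtain ⟨a, ha, b, hb, hab⟩ := this
    have hc : b⁻¹ ∈ K := Set.mem_inv.mp hb
    refine ⟨(a, b⁻¹), ?_, by rw [inv_inv]; exact hab⟩
    rw [Finset.mem_offDiag]
    refine ⟨Set.mem_toFinset.mpr ha, Set.mem_toFinset.mpr hc, ?_⟩
    intro heq
    apply h1D
    have heq' : a = b⁻¹ := heq
    have : δ = 1 := by rw [← hab]; show a * b = 1; rw [heq']; group
    rwa [this] at hδD
  have hcards : Kf.offDiag.card = Df.card := by
    rw [Finset.offDiag_card, ← hcardD, hcard, hcardK, Nat.mul_sub_one]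
  have hinj : ∀ p ∈ Kf.offDiag, ∀ q ∈ Kf.offDiag,
      p.1 * p.2⁻¹ = q.1 * q.2⁻¹ → p = q := by
    intro p hp q hq hpq
    exact Finset.inj_on_of_surj_on_of_card_le (fun p _ => p.1 * p.2⁻¹) hmaps
      (fun b hb => by obtain ⟨p, hp', hp''⟩ := hsurj b hb; exact ⟨p, hp', hp''⟩)
      (le_of_eq hcards) hp hq hpq
  -- all elements of K commute
  have hcomm : ∀ a ∈ K, ∀ b ∈ K, a * b = b * a := by
    intro a ha b hb
    by_cases hab : a * b = b * a
    · exact hab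
    · exfalso
      have h1 : a * b * a⁻¹ ∈ K := hconj b hb a
      have h2 : b * a * b⁻¹ ∈ K := hconj a ha b
      have hp : ((a * b * a⁻¹, b) : G × G) ∈ Kf.offDiag := by
        rw [Finset.mem_offDiag]
        refine ⟨Set.mem_toFinset.mpr h1, Set.mem_toFinset.mpr hb, ?_⟩
        intro heq
        apply hab
        have heq' : a * b * a⁻¹ = b := heq
        calc a * b = (a * b * a⁻¹) * a := by group
        _ = b * a := by rw [heq']
      have hq : ((a, b * a * b⁻¹) : G × G) ∈ Kf.offDiag := by
        rw [Finset.mem_offDiag]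
        refine ⟨Set.mem_toFinset.mpr ha, Set.mem_toFinset.mpr h2, ?_⟩
        intro heq
        apply hab
        have heq' : a = b * a * b⁻¹ := heq
        calc a * b = (b * a * b⁻¹) * b := by rw [← heq']
        _ = b * a := by group
      have heq : (a * b * a⁻¹) * b⁻¹ = a * (b * a * b⁻¹)⁻¹ := by group
      have := hinj _ hp _ hq heq
      have h3 : a * b * a⁻¹ = a := (Prod.ext_iff.mp this).1
      apply hab
      calc a * b = (a * b * a⁻¹) * a := by group
      _ = a * a := by rw [h3]
      _ = b * a := by
        have : b = a := by
          have := h3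
          calc b = a⁻¹ * (a * b * a⁻¹) * a := by group
          _ = a⁻¹ * a * a := by rw [h3]
          _ = a := by group
        rw [this]
  refine ⟨⟨?_⟩⟩
  rintro ⟨a, haK⟩ ⟨b, hbK⟩
  have hle := Subgroup.closure_le_centralizer_centralizer K
  exact Subtype.ext <| Set.centralizer_centralizer_comm_of_comm hcomm a
    (Subgroup.mem_centralizer_iff.mp (hle haK)) b
    (Subgroup.mem_centralizer_iff.mp (hle hbK))
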